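/- Let g(x,y,r) = (r/π)·(1 − Σ_i ω_i 1{y=i})·E_t[h(X)|Y=k] + ((r/π)·Σ_i ω_i 1{y=i} − (1−r)/(1−π))·h(x), where h is any measurable function with E_t[h(X)] = 0. Then E[g(X,Y,R)] = 0 under the pooled distribution. -/

import Mathlib

open MeasureTheory

/-- Let
`g(x,y,r) = (r/π)(1 − ∑_i ω_i 1{y=i})·E_t[h(X)|Y=k] + ((r/π) ∑_i ω_i 1{y=i} − (1−r)/(1−π))·h(x)`
with `E_t[h(X)] = 0`.  Then `E[g(X,Y,R)] = 0` under the pooled distribution, where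
`P(R=1)=π`, `(X,Y)|R=1 ∼ p_s`, `(X,Y)|R=0 ∼ p_t`, with common conditionals `μ_j = p(x|y=j)`. -/
theorem elsa_stmt4 {k : ℕ} (hk : 0 < k) {X : Type*} [MeasurableSpace X]
    (μ : Fin k → Measure X) [∀ j, IsProbabilityMeasure (μ j)]  -- common p(x|y=j)
    (ps pt : Fin k → ℝ) (hps : ∀ j, 0 < ps j)
    (hps1 : ∑ j, ps j = 1) (hpt1 : ∑ j, pt j = 1)
    (π : ℝ) (hπ : π ∈ Set.Ioo (0:ℝ) 1)
    (ω : Fin k → ℝ) (hω : ∀ j, ω j = pt j / ps j)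
    (h : X → EuclideanSpace ℝ (Fin (k-1)))
    (hmeas : Measurable h) (hint : ∀ j, Integrable h (μ j))
    (hEt : ∑ j, pt j • (∫ x, h x ∂(μ j)) = 0)   -- E_t[h(X)] = 0
    (c : EuclideanSpace ℝ (Fin (k-1)))
    (hc : c = ∫ x, h x ∂(μ ⟨k - 1, by omega⟩)) :  -- c = E_t[h(X)|Y=k]
    -- pooled expectation of g: the R=1 part plus the R=0 part
    π • (∑ j, ps j • ∫ x,
          ((1/π) * (1 - ω j)) • c + ((1/π) * ω j - 0) • h x ∂(μ j))
      + (1 - π) • (∑ j, pt j • ∫ x,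
          ((0:ℝ)) • c + (0 - 1/(1-π)) • h x ∂(μ j)) = 0 := by
  obtain ⟨hπ0, hπ1⟩ := hπ
  have hπne : π ≠ 0 := ne_of_gt hπ0
  have h1πne : (1 : ℝ) - π ≠ 0 := sub_ne_zero.mpr (ne_of_gt hπ1)
  have key : ∀ j : Fin k, ps j * ω j = pt j := by
    intro j
    rw [hω j]
    field_simp [(hps j).ne']
  have hI : ∀ j : Fin k, (∫ x, ((1/π) * (1 - ω j)) • c + ((1/π) * ω j - 0) • h x ∂(μ j))
      = ((1/π) * (1 - ω j)) • c + ((1/π) * ω j) • (∫ x, h x ∂(μ j)) := by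
    intro j
    have hi : Integrable (fun x => ((1/π) * ω j - 0) • h x) (μ j) := (hint j).smul ((1/π) * ω j - 0)
    rw [integral_add (integrable_const _) hi, integral_const, integral_smul, probReal_univ]
    simp
  have hI2 : ∀ j : Fin k, (∫ x, ((0:ℝ)) • c + (0 - 1/(1-π)) • h x ∂(μ j))
      = (0 - 1/(1-π)) • (∫ x, h x ∂(μ j)) := by
    intro j
    have hi : Integrable (fun x => (0 - 1/(1-π)) • h x) (μ j) := (hint j).smul (0 - 1/(1-π))
    rw [integral_add (integrable_const _) hi, integral_smul]
    simp [integral_neg, integral_smul]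
  simp only [hI, hI2]
  have e1 : π • (∑ j, ps j • (((1/π) * (1 - ω j)) • c + ((1/π) * ω j) • (∫ x, h x ∂(μ j))))
      = (∑ j, (ps j - pt j)) • c + ∑ j, pt j • (∫ x, h x ∂(μ j)) := by
    rw [Finset.smul_sum, Finset.sum_smul, ← Finset.sum_add_distrib]
    refine Finset.sum_congr rfl fun j _ => ?_
    rw [smul_add, smul_add, smul_smul, smul_smul, smul_smul, smul_smul, ← key j]
    congr 1
    · congr 1; field_simp
    · congr 1; field_simp
  have e2 : (1 - π) • (∑ j, pt j • ((0 - 1/(1-π)) • (∫ x, h x ∂(μ j))))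
      = -(∑ j, pt j • (∫ x, h x ∂(μ j))) := by
    rw [Finset.smul_sum, ← Finset.sum_neg_distrib]
    refine Finset.sum_congr rfl fun j _ => ?_
    rw [smul_smul, smul_smul, ← neg_smul]
    congr 1
    field_simp; ring
  rw [e1, e2, hEt]
  simp [hps1, hpt1]
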